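/- Let g : ℝ^N → ℝ be nonnegative, Lipschitz with Lipschitz constant L > 0, with mass ρ = ∫ g dv ∈ (0,∞) and energy e = ∫ g|v|² dv < ∞. Set R₀ = √(2e/ρ). Then there exist v̄ ∈ closed ball B(0,R₀), δ₀ = ρ/(4 Vol(B(0,R₀)) L) > 0 and η = ρ/(4 Vol(B(0,R₀))) > 0 such that g(v) ≥ η for all v ∈ B(v̄, δ₀). -/

import Mathlib

open MeasureTheory Real

/-- "Upheaval point": a nonnegative Lipschitz density with positive mass and finite energy
is bounded below by `η = ρ/(4 Vol(B(0,R₀)))` on a ball `B(v̄, δ₀)` with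
`v̄ ∈ B(0,R₀)`, `R₀ = √(2e/ρ)` and `δ₀ = ρ/(4 Vol(B(0,R₀)) L)`. -/
theorem upheaval_point (N : ℕ) (hN : 1 ≤ N) (g : EuclideanSpace ℝ (Fin N) → ℝ)
    (L : ℝ) (hL : 0 < L) (hg : ∀ v, 0 ≤ g v)
    (hLip : LipschitzWith (Real.toNNReal L) g)
    (hint : Integrable g) (hint2 : Integrable (fun v => g v * ‖v‖ ^ 2))
    (hρ : 0 < ∫ v, g v) :
    ∃ vbar ∈ Metric.closedBall (0 : EuclideanSpace ℝ (Fin N))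
        (Real.sqrt (2 * (∫ v, g v * ‖v‖ ^ 2) / (∫ v, g v))),
      ∀ v ∈ Metric.ball vbar
          ((∫ v, g v) /
            (4 * (volume (Metric.closedBall (0 : EuclideanSpace ℝ (Fin N))
              (Real.sqrt (2 * (∫ v, g v * ‖v‖ ^ 2) / (∫ v, g v))))).toReal * L)),
        (∫ v, g v) /
          (4 * (volume (Metric.closedBall (0 : EuclideanSpace ℝ (Fin N))
            (Real.sqrt (2 * (∫ v, g v * ‖v‖ ^ 2) / (∫ v, g v))))).toReal) ≤ g v := by
  haveI : Nonempty (Fin N) := ⟨⟨0, hN⟩⟩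
  haveI : Nontrivial (EuclideanSpace ℝ (Fin N)) := inferInstance
  set ρ := ∫ v, g v with hρdef
  set e := ∫ v, g v * ‖v‖ ^ 2 with hedef
  -- e > 0
  have hgcont : Continuous g := hLip.continuous
  have he0 : 0 ≤ e := integral_nonneg fun v => mul_nonneg (hg v) (sq_nonneg _)
  have hepos : 0 < e := by
    obtain ⟨v₀, hv₀⟩ : ∃ v, 0 < g v := by
      by_contra hc
      push_neg at hc
      have : ∀ v, g v = 0 := fun v => le_antisymm (hc v) (hg v)
      simp [hρdef, this] at hρ
    have hsupp : 0 < volume (Function.support fun v => g v * ‖v‖ ^ 2) := by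
      obtain ⟨r, hr, hball⟩ : ∃ r > 0, Metric.ball v₀ r ⊆ g ⁻¹' Set.Ioi 0 :=
        Metric.isOpen_iff.mp (isOpen_Ioi.preimage hgcont) v₀ hv₀
      have hsub : Metric.ball v₀ r \ {0} ⊆ Function.support fun v => g v * ‖v‖ ^ 2 := by
        rintro v ⟨hv1, hv2⟩
        have h1 : 0 < g v := hball hv1
        have h2 : v ≠ 0 := hv2
        have : 0 < ‖v‖ := norm_pos_iff.mpr h2
        simp only [Function.mem_support]
        positivity
      calc (0 : ENNReal) < volume (Metric.ball v₀ r) := Metric.measure_ball_pos volume v₀ hr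
        _ = volume (Metric.ball v₀ r \ {0}) := (measure_diff_null (measure_singleton 0)).symm
        _ ≤ _ := measure_mono hsub
    exact (MeasureTheory.integral_pos_iff_support_of_nonneg
      (fun v => mul_nonneg (hg v) (sq_nonneg _)) hint2).mpr hsupp
  have hρe : 0 < 2 * e / ρ := by positivity
  set R₀ := Real.sqrt (2 * e / ρ) with hR₀def
  have hR₀ : 0 < R₀ := Real.sqrt_pos.mpr hρe
  have hR₀sq : R₀ ^ 2 = 2 * e / ρ := Real.sq_sqrt hρe.le
  set B := Metric.closedBall (0 : EuclideanSpace ℝ (Fin N)) R₀ with hBdef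
  have hBmeas : MeasurableSet B := measurableSet_closedBall
  have hVpos : 0 < volume B :=
    lt_of_lt_of_le (Metric.measure_ball_pos volume 0 hR₀)
      (measure_mono Metric.ball_subset_closedBall)
  have hVfin : volume B < ⊤ := (isCompact_closedBall 0 R₀).measure_lt_top
  set V := (volume B).toReal with hVdef
  have hV : 0 < V := ENNReal.toReal_pos hVpos.ne' hVfin.ne
  -- Chebyshev
  have cheb : ∫ v in Bᶜ, g v ≤ ρ / 2 := by
    have h1 : ∫ v in Bᶜ, g v ≤ ∫ v in Bᶜ, g v * ‖v‖ ^ 2 / R₀ ^ 2 := by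
      apply setIntegral_mono_on hint.integrableOn (hint2.div_const _).integrableOn
        hBmeas.compl
      intro v hv
      have hv' : R₀ < ‖v‖ := by
        simpa [B, Metric.mem_closedBall, not_le, dist_zero_right] using hv
      have : R₀ ^ 2 ≤ ‖v‖ ^ 2 := by nlinarith [norm_nonneg v]
      rw [le_div_iff₀ (by positivity)]
      nlinarith [hg v]
    have h2 : ∫ v in Bᶜ, g v * ‖v‖ ^ 2 / R₀ ^ 2 ≤ e / R₀ ^ 2 := by
      rw [integral_div]
      apply div_le_div_of_nonneg_right ?_ (by positivity)
      exact setIntegral_le_integral hint2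
        (Filter.Eventually.of_forall fun v => mul_nonneg (hg v) (sq_nonneg _))
    have h3 : e / R₀ ^ 2 = ρ / 2 := by
      rw [hR₀sq]
      field_simp
    linarith
  -- at least half the mass in B
  have hmass : ρ / 2 ≤ ∫ v in B, g v := by
    have := MeasureTheory.integral_add_compl hBmeas hint
    have : (∫ v in B, g v) + ∫ v in Bᶜ, g v = ρ := this
    linarith
  -- maximum point
  obtain ⟨vbar, hvbarB, hmax⟩ :=
    (isCompact_closedBall (0 : EuclideanSpace ℝ (Fin N)) R₀).exists_isMaxOn
      ⟨0, Metric.mem_closedBall_self hR₀.le⟩ hgcont.continuousOn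
  have hub : ∫ v in B, g v ≤ g vbar * V := by
    have h1 : ∫ v in B, g v ≤ ∫ _v in B, g vbar :=
      setIntegral_mono_on hint.integrableOn (integrableOn_const hVfin.ne)
        hBmeas fun v hv => hmax hv
    have h2 : ∫ _v in B, g vbar = V * g vbar := by
      rw [setIntegral_const, smul_eq_mul]
      rfl
    rw [mul_comm]
    exact h1.trans_eq h2
  have hgvbar : ρ / (2 * V) ≤ g vbar := by
    rw [div_le_iff₀ (by positivity)]
    nlinarith
  refine ⟨vbar, hvbarB, fun v hv => ?_⟩
  have hd : dist v vbar < ρ / (4 * V * L) := Metric.mem_ball.mp hv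
  have hlip := hLip.dist_le_mul vbar v
  rw [Real.coe_toNNReal L hL.le] at hlip
  have : |g vbar - g v| ≤ L * dist vbar v := by
    rwa [Real.dist_eq] at hlip
  have habs : g vbar - g v ≤ L * dist v vbar := by
    rw [dist_comm]
    exact (le_abs_self _).trans this
  have hLd : L * dist v vbar ≤ ρ / (4 * V) := by
    have : L * dist v vbar ≤ L * (ρ / (4 * V * L)) :=
      mul_le_mul_of_nonneg_left hd.le hL.le
    calc L * dist v vbar ≤ L * (ρ / (4 * V * L)) := this
      _ = ρ / (4 * V) := by field_simp
  have : ρ / (2 * V) - ρ / (4 * V) ≤ g v := by linarith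
  calc ρ / (4 * V) = ρ / (2 * V) - ρ / (4 * V) := by field_simp; ring
    _ ≤ g v := this
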